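/- Let L, U, ρ, C be positive real numbers with 0 < L < U and ρ·C > U − L. Define x(k) = (U/L)^{k−1}·((U − L − ρ·C)/(U − L)) + ρ·C/(U − L) for k ≥ 1. Then for every natural number k ≥ 1 with x(k) ≥ ρ·C/U, it holds that (k : ℝ) ≤ log(ρ·C/(ρ·C + L − U)) / log(U/L). -/

import Mathlib

/-- Counting bound of Theorem 3: if
`x k = (U/L)^{k−1}·((U−L−ρ·C)/(U−L)) + ρ·C/(U−L)` still satisfies `x k ≥ ρ·C/U`, then
`k ≤ log(ρ·C/(ρ·C + L − U)) / log(U/L)`. -/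
theorem resolve_count_bound (L U ρ C : ℝ)
    (hL : 0 < L) (hLU : L < U) (hρ : 0 < ρ) (hC : 0 < C)
    (h : U - L < ρ * C) (k : ℕ) (hk : 1 ≤ k)
    (hx : ρ * C / U ≤ (U / L) ^ (k - 1) * ((U - L - ρ * C) / (U - L)) + ρ * C / (U - L)) :
    (k : ℝ) ≤ Real.log (ρ * C / (ρ * C + L - U)) / Real.log (U / L) := by
  have hU : 0 < U := hL.trans hLU
  have hD : 0 < U - L := sub_pos.mpr hLU
  have hP : 0 < ρ * C := mul_pos hρ hC
  have hPD : 0 < ρ * C - (U - L) := sub_pos.mpr h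
  have hr : (1 : ℝ) < U / L := (one_lt_div hL).mpr hLU
  set t : ℝ := (U / L) ^ (k - 1) with ht
  have ht0 : 0 < t := pow_pos (by positivity) _
  -- clear denominators in hx
  have h1 : t * (ρ * C - (U - L)) * U ≤ ρ * C * L := by
    rw [mul_div_assoc', ← add_div, div_le_div_iff₀ hU hD] at hx
    nlinarith [hx]
  -- r^k ≤ P/(P-D)
  have h2 : (U / L) ^ k ≤ ρ * C / (ρ * C - (U - L)) := by
    have hk1 : k = (k - 1) + 1 := (Nat.succ_pred_eq_of_pos hk).symm
    rw [hk1, pow_succ, ← ht, le_div_iff₀ hPD]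
    calc t * (U / L) * (ρ * C - (U - L)) = t * (ρ * C - (U - L)) * U / L := by ring
    _ ≤ ρ * C := by rw [div_le_iff₀ hL]; nlinarith [h1]
  have h3 : Real.log ((U / L) ^ k) ≤ Real.log (ρ * C / (ρ * C - (U - L))) :=
    Real.log_le_log (pow_pos (by positivity) _) h2
  rw [Real.log_pow] at h3
  have hlr : 0 < Real.log (U / L) := Real.log_pos hr
  have heq : ρ * C + L - U = ρ * C - (U - L) := by ring
  rw [heq, le_div_iff₀ hlr]
  exact h3
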